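/- Let ζ ∈ (0,d) and w ∈ ℝ^d with ‖w‖ ≥ 1. Then ∫_{ℝ^d} ‖x + w‖^{−ζ} (2π)^{−d/2} e^{−‖x‖²/2} dx ≤ c ‖w‖^{−ζ} for a constant c depending only on d and ζ. -/

import Mathlib

open MeasureTheory Set
open scoped ENNReal
open Metric

lemma aux_exp_bound (d : ℕ) {s t : ℝ} (hs : 0 ≤ s) (hsd : s ≤ 2*d) (ht : 1 ≤ t) :
    t ^ s * Real.exp (-t^2/8) ≤ 8^d * (d.factorial : ℝ) := by
  have ht0 : (0:ℝ) < t := one_pos.trans_le ht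
  have h1 : t ^ s ≤ t ^ (2*(d:ℝ)) := Real.rpow_le_rpow_of_exponent_le ht (by exact_mod_cast hsd)
  have h2 : t ^ (2*(d:ℝ)) = (t^2)^d := by
    rw [← Real.rpow_natCast (t^2) d, ← Real.rpow_natCast t 2, ← Real.rpow_mul ht0.le]
    norm_num [mul_comm]
  have h3 : (t^2/8)^d / (d.factorial : ℝ) ≤ Real.exp (t^2/8) :=
    Real.pow_div_factorial_le_exp (x := t^2/8) (by positivity) d
  have hfac : (0:ℝ) < (d.factorial : ℝ) := by exact_mod_cast d.factorial_pos
  have h4 : (t^2)^d ≤ 8^d * (d.factorial : ℝ) * Real.exp (t^2/8) := by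
    rw [div_pow] at h3
    rw [div_div] at h3
    have := (div_le_iff₀ (by positivity : (0:ℝ) < 8^d * (d.factorial:ℝ))).mp h3
    linarith
  have hexp : Real.exp (-t^2/8) = (Real.exp (t^2/8))⁻¹ := by
    rw [← Real.exp_neg]; ring_nf
  calc t ^ s * Real.exp (-t^2/8) ≤ (t^2)^d * Real.exp (-t^2/8) := by
        have := Real.exp_pos (-t^2/8)
        nlinarith [h1, h2.le, h2.ge]
    _ ≤ (8^d * (d.factorial : ℝ) * Real.exp (t^2/8)) * Real.exp (-t^2/8) := by
        have := Real.exp_pos (-t^2/8); nlinarith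
    _ = 8^d * (d.factorial : ℝ) := by
        have hz : t^2/8 + -t^2/8 = 0 := by ring
        rw [mul_assoc, ← Real.exp_add, hz, Real.exp_zero, mul_one]

lemma aux_ball (d : ℕ) {ζ : ℝ} (h0 : 0 < ζ) (hd : ζ < d) :
    ∫⁻ y in ball (0:EuclideanSpace ℝ (Fin d)) 1, ENNReal.ofReal (‖y‖ ^ (-ζ)) < ⊤ := by
  have hd0 : 0 < d := by exact_mod_cast h0.trans hd
  haveI : Nonempty (Fin d) := ⟨⟨0, hd0⟩⟩
  haveI : Nontrivial (EuclideanSpace ℝ (Fin d)) := by infer_instance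
  set μ := volume.restrict (ball (0:EuclideanSpace ℝ (Fin d)) 1) with hμ
  have hnn : 0 ≤ᵐ[μ] fun y : EuclideanSpace ℝ (Fin d) => ‖y‖ ^ (-ζ) :=
    Filter.Eventually.of_forall fun y => Real.rpow_nonneg (norm_nonneg _) _
  have hm : AEMeasurable (fun y : EuclideanSpace ℝ (Fin d) => ‖y‖ ^ (-ζ)) μ := by fun_prop
  rw [show (∫⁻ y in ball (0:EuclideanSpace ℝ (Fin d)) 1, ENNReal.ofReal (‖y‖ ^ (-ζ)))
      = ∫⁻ y, ENNReal.ofReal (‖y‖ ^ (-ζ)) ∂μ from rfl,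
    lintegral_eq_lintegral_meas_lt μ hnn hm]
  set V := volume (ball (0:EuclideanSpace ℝ (Fin d)) 1) with hV
  have hVfin : V < ⊤ := measure_ball_lt_top
  have hsub : ∀ t : ℝ, 0 < t →
      {a : EuclideanSpace ℝ (Fin d) | t < ‖a‖ ^ (-ζ)} ⊆ ball 0 (t ^ (-(1/ζ))) := by
    intro t ht a ha
    simp only [mem_setOf_eq] at ha
    have ha0 : a ≠ 0 := by
      rintro rfl
      simp only [norm_zero] at ha
      rw [Real.zero_rpow (by linarith : -ζ ≠ 0)] at ha
      linarith
    have hna : 0 < ‖a‖ := norm_pos_iff.mpr ha0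
    rw [Real.rpow_neg hna.le] at ha
    have h1 : ‖a‖ ^ ζ < t⁻¹ := by
      have hpos : 0 < ‖a‖ ^ ζ := Real.rpow_pos_of_pos hna _
      rw [lt_inv_comm₀ ht hpos] at ha; exact ha
    have h2 : (‖a‖ ^ ζ) ^ (1/ζ) < (t⁻¹) ^ (1/ζ) :=
      Real.rpow_lt_rpow (by positivity) h1 (by positivity)
    rw [← Real.rpow_mul hna.le, mul_one_div, div_self h0.ne', Real.rpow_one] at h2
    rw [mem_ball_zero_iff]
    rw [← Real.rpow_neg_one t, ← Real.rpow_mul ht.le] at h2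
    convert h2 using 2
    ring
  have hmeas_le : ∀ t ∈ Ioi (1:ℝ),
      μ {a : EuclideanSpace ℝ (Fin d) | t < ‖a‖ ^ (-ζ)}
        ≤ ENNReal.ofReal (t ^ (-((d:ℝ)/ζ))) * V := by
    intro t ht
    have ht0 : (0:ℝ) < t := lt_trans one_pos ht
    calc μ {a | t < ‖a‖ ^ (-ζ)} ≤ volume {a : EuclideanSpace ℝ (Fin d) | t < ‖a‖ ^ (-ζ)} :=
          Measure.restrict_le_self _
      _ ≤ volume (ball (0:EuclideanSpace ℝ (Fin d)) (t ^ (-(1/ζ)))) :=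
          measure_mono (hsub t ht0)
      _ = ENNReal.ofReal ((t ^ (-(1/ζ))) ^ (Module.finrank ℝ (EuclideanSpace ℝ (Fin d)))) * V :=
          Measure.addHaar_ball _ _ (Real.rpow_nonneg ht0.le _)
      _ = ENNReal.ofReal (t ^ (-((d:ℝ)/ζ))) * V := by
          congr 1
          rw [finrank_euclideanSpace_fin, ← Real.rpow_natCast (t ^ (-(1/ζ))) d,
            ← Real.rpow_mul ht0.le]
          congr 1
          ring
  calc (∫⁻ t in Ioi (0:ℝ), μ {a : EuclideanSpace ℝ (Fin d) | t < ‖a‖ ^ (-ζ)})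
      ≤ (∫⁻ t in Ioc (0:ℝ) 1, μ {a | t < ‖a‖ ^ (-ζ)})
        + ∫⁻ t in Ioi (1:ℝ), μ {a | t < ‖a‖ ^ (-ζ)} := by
        refine le_trans (lintegral_mono_set ?_) (lintegral_union_le _ _ _)
        rw [Ioc_union_Ioi_eq_Ioi zero_le_one]
    _ < ⊤ := by
        apply ENNReal.add_lt_top.mpr
        constructor
        · calc (∫⁻ t in Ioc (0:ℝ) 1, μ {a | t < ‖a‖ ^ (-ζ)})
              ≤ ∫⁻ _ in Ioc (0:ℝ) 1, V := by
                apply lintegral_mono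
                intro t
                exact (measure_mono (subset_univ _)).trans (by rw [Measure.restrict_apply_univ])
            _ = V * volume (Ioc (0:ℝ) 1) := setLIntegral_const _ _
            _ < ⊤ := ENNReal.mul_lt_top hVfin (by simp [Real.volume_Ioc])
        · calc (∫⁻ t in Ioi (1:ℝ), μ {a | t < ‖a‖ ^ (-ζ)})
              ≤ ∫⁻ t in Ioi (1:ℝ), ENNReal.ofReal (t ^ (-((d:ℝ)/ζ))) * V :=
                setLIntegral_mono' measurableSet_Ioi hmeas_le
            _ = (∫⁻ t in Ioi (1:ℝ), ENNReal.ofReal (t ^ (-((d:ℝ)/ζ)))) * V := by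
                rw [lintegral_mul_const'' _ (by fun_prop)]
            _ < ⊤ := by
                have hint : IntegrableOn (fun t : ℝ => t ^ (-((d:ℝ)/ζ))) (Ioi 1) := by
                  apply integrableOn_Ioi_rpow_of_lt _ one_pos
                  rw [neg_lt_neg_iff]
                  exact (one_lt_div h0).mpr hd
                exact ENNReal.mul_lt_top hint.lintegral_lt_top hVfin


set_option maxHeartbeats 1000000 in
/-- Gaussian integral bound: for `ζ ∈ (0,d)` there is `c = c(d,ζ) > 0` such that for all
`w` with `‖w‖ ≥ 1`, `∫ ‖x + w‖^{−ζ} (2π)^{−d/2} e^{−‖x‖²/2} dx ≤ c ‖w‖^{−ζ}`. -/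
theorem stmt13 (d : ℕ) (ζ : ℝ) (hζ : ζ ∈ Set.Ioo (0:ℝ) (d:ℝ)) :
    ∃ c > (0:ℝ), ∀ w : EuclideanSpace ℝ (Fin d), 1 ≤ ‖w‖ →
      (∫⁻ x : EuclideanSpace ℝ (Fin d),
          ENNReal.ofReal
            (‖x + w‖ ^ (-ζ) * ((2*Real.pi) ^ (-(d:ℝ)/2) * Real.exp (-‖x‖^2/2))))
        ≤ ENNReal.ofReal (c * ‖w‖ ^ (-ζ)) := by
  obtain ⟨hζ0, hζd⟩ := hζ
  have hdR : (0:ℝ) < d := hζ0.trans hζd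
  set K : ℝ := (2*Real.pi) ^ (-(d:ℝ)/2) with hK
  have hKpos : 0 < K := Real.rpow_pos_of_pos (by positivity) _
  -- Gaussian integrability
  have hgi : Integrable (fun x : EuclideanSpace ℝ (Fin d) => K * Real.exp (-‖x‖^2/2)) := by
    apply Integrable.const_mul
    have h := (GaussianFourier.integrable_cexp_neg_mul_sq_norm_add
      (V := EuclideanSpace ℝ (Fin d)) (b := (1/2 : ℂ)) (by norm_num) 0 0).norm
    apply h.congr
    filter_upwards with v
    simp only [neg_mul, zero_mul, add_zero, Complex.norm_exp]
    congr 1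
    have h2 : (-(1/2 * (‖v‖:ℂ)^2)) = ((-(1/2 * ‖v‖^2) : ℝ) : ℂ) := by
      push_cast
      ring
    rw [h2, Complex.ofReal_re]
    ring
  set Cg : ℝ≥0∞ := ∫⁻ x : EuclideanSpace ℝ (Fin d),
      ENNReal.ofReal (K * Real.exp (-‖x‖^2/2)) with hCgdef
  have hCgfin : Cg < ⊤ := hgi.lintegral_lt_top
  set B : ℝ≥0∞ := ∫⁻ y in ball (0:EuclideanSpace ℝ (Fin d)) 1,
      ENNReal.ofReal (‖y‖ ^ (-ζ)) with hBdef
  have hBfin : B < ⊤ := aux_ball d hζ0 hζd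
  set V : ℝ≥0∞ := volume (ball (0:EuclideanSpace ℝ (Fin d)) 1) with hVdef
  have hVfin : V < ⊤ := measure_ball_lt_top
  set M : ℝ := 8^d * (d.factorial : ℝ) with hM
  have hMpos : 0 < M := by positivity
  refine ⟨(2:ℝ)^ζ * Cg.toReal + K * M * (B.toReal + V.toReal) + 1, by positivity, ?_⟩
  intro w hw
  have hw0 : (0:ℝ) < ‖w‖ := one_pos.trans_le hw
  set t : ℝ := ‖w‖ with ht
  set r : ℝ := t/2 with hr
  have hr0 : 0 < r := by positivity
  set A : Set (EuclideanSpace ℝ (Fin d)) := {x | r ≤ ‖x + w‖} with hA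
  have hAm : MeasurableSet A := by
    apply measurableSet_le measurable_const
    fun_prop
  -- split
  rw [← lintegral_add_compl _ hAm]
  -- bound on A
  have hA_le : (∫⁻ x in A, ENNReal.ofReal (‖x + w‖ ^ (-ζ) * (K * Real.exp (-‖x‖^2/2))))
      ≤ ENNReal.ofReal (r ^ (-ζ)) * Cg := by
    calc (∫⁻ x in A, ENNReal.ofReal (‖x + w‖ ^ (-ζ) * (K * Real.exp (-‖x‖^2/2))))
        ≤ ∫⁻ x in A, ENNReal.ofReal (r ^ (-ζ)) * ENNReal.ofReal (K * Real.exp (-‖x‖^2/2)) := by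
          apply setLIntegral_mono' hAm
          intro x hx
          rw [ENNReal.ofReal_mul (Real.rpow_nonneg (norm_nonneg _) _)]
          refine mul_le_mul_left (ENNReal.ofReal_le_ofReal ?_) _
          exact Real.rpow_le_rpow_of_nonpos hr0 hx (neg_nonpos.mpr hζ0.le)
      _ = ENNReal.ofReal (r ^ (-ζ)) * ∫⁻ x in A, ENNReal.ofReal (K * Real.exp (-‖x‖^2/2)) := by
          rw [lintegral_const_mul' _ _ ENNReal.ofReal_ne_top]
      _ ≤ ENNReal.ofReal (r ^ (-ζ)) * Cg :=
          mul_le_mul_right (setLIntegral_le_lintegral _ _) _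
  -- bound on Aᶜ
  have hAc_le : (∫⁻ x in Aᶜ, ENNReal.ofReal (‖x + w‖ ^ (-ζ) * (K * Real.exp (-‖x‖^2/2))))
      ≤ ENNReal.ofReal (K * Real.exp (-t^2/8)) * (B + ENNReal.ofReal (t^d) * V) := by
    have hnormx : ∀ x ∈ Aᶜ, Real.exp (-‖x‖^2/2) ≤ Real.exp (-t^2/8) := by
      intro x hx
      simp only [hA, mem_compl_iff, mem_setOf_eq, not_le] at hx
      have h1 : t - ‖x + w‖ ≤ ‖x‖ := by
        have h3 := norm_sub_norm_le w (x + w)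
        have h2 : w - (x + w) = -x := by abel
        rw [h2, norm_neg] at h3
        exact h3
      have h3 : r ≤ ‖x‖ := by
        rw [hr] at hx ⊢; linarith
      apply Real.exp_le_exp.mpr
      have h4 : r^2 ≤ ‖x‖^2 := by nlinarith [norm_nonneg x]
      rw [hr] at h4
      nlinarith
    calc (∫⁻ x in Aᶜ, ENNReal.ofReal (‖x + w‖ ^ (-ζ) * (K * Real.exp (-‖x‖^2/2))))
        ≤ ∫⁻ x in Aᶜ, ENNReal.ofReal (‖x + w‖ ^ (-ζ)) * ENNReal.ofReal (K * Real.exp (-t^2/8)) := by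
          apply setLIntegral_mono' hAm.compl
          intro x hx
          rw [ENNReal.ofReal_mul (Real.rpow_nonneg (norm_nonneg _) _)]
          refine mul_le_mul_right (ENNReal.ofReal_le_ofReal ?_) _
          exact mul_le_mul_of_nonneg_left (hnormx x hx) hKpos.le
      _ = (∫⁻ x in Aᶜ, ENNReal.ofReal (‖x + w‖ ^ (-ζ))) * ENNReal.ofReal (K * Real.exp (-t^2/8)) := by
          rw [lintegral_mul_const' _ _ ENNReal.ofReal_ne_top]
      _ ≤ (B + ENNReal.ofReal (t^d) * V) * ENNReal.ofReal (K * Real.exp (-t^2/8)) := by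
          refine mul_le_mul_left ?_ _
          -- Aᶜ ⊆ ball (-w) r
          have hsub : Aᶜ ⊆ ball (-w) r := by
            intro x hx
            simp only [hA, mem_compl_iff, mem_setOf_eq, not_le] at hx
            rw [mem_ball, dist_eq_norm, sub_neg_eq_add]
            exact hx
          calc (∫⁻ x in Aᶜ, ENNReal.ofReal (‖x + w‖ ^ (-ζ)))
              ≤ ∫⁻ x in ball (-w) r, ENNReal.ofReal (‖x + w‖ ^ (-ζ)) :=
                lintegral_mono_set hsub
            _ = ∫⁻ y in ball (0:EuclideanSpace ℝ (Fin d)) r, ENNReal.ofReal (‖y‖ ^ (-ζ)) := by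
                have hmp : MeasurePreserving (fun y : EuclideanSpace ℝ (Fin d) => y + -w)
                    volume volume := measurePreserving_add_right volume (-w)
                have hemb : MeasurableEmbedding (fun y : EuclideanSpace ℝ (Fin d) => y + -w) :=
                  (MeasurableEquiv.addRight (-w)).measurableEmbedding
                have key := hmp.setLIntegral_comp_preimage_emb hemb
                  (fun x => ENNReal.ofReal (‖x + w‖ ^ (-ζ))) (ball (-w) r)
                rw [← key]
                have hpre : (fun y : EuclideanSpace ℝ (Fin d) => y + -w) ⁻¹' ball (-w) r
                    = ball (0:EuclideanSpace ℝ (Fin d)) r := by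
                  ext y
                  simp [mem_ball, dist_eq_norm, sub_neg_eq_add, add_assoc]
                rw [hpre]
                apply lintegral_congr
                intro y
                congr 2
                rw [add_assoc, neg_add_cancel, add_zero]
            _ ≤ B + ENNReal.ofReal (t^d) * V := by
                have hsplit : ball (0:EuclideanSpace ℝ (Fin d)) r
                    ⊆ ball 0 1 ∪ (ball (0:EuclideanSpace ℝ (Fin d)) r \ ball 0 1) := by
                  intro y hy
                  by_cases h : y ∈ ball (0:EuclideanSpace ℝ (Fin d)) 1
                  · exact Or.inl h
                  · exact Or.inr ⟨hy, h⟩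
                refine le_trans (lintegral_mono_set hsplit)
                  (le_trans (lintegral_union_le _ _ _) (add_le_add le_rfl ?_))
                calc (∫⁻ y in ball (0:EuclideanSpace ℝ (Fin d)) r \ ball 0 1,
                      ENNReal.ofReal (‖y‖ ^ (-ζ)))
                    ≤ ∫⁻ _ in ball (0:EuclideanSpace ℝ (Fin d)) r \ ball 0 1, 1 := by
                      apply setLIntegral_mono' (measurableSet_ball.diff measurableSet_ball)
                      intro y hy
                      have h1 : (1:ℝ) ≤ ‖y‖ := by
                        have h5 := hy.2
                        rw [mem_ball_zero_iff, not_lt] at h5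
                        exact h5
                      have h6 : ‖y‖ ^ (-ζ) ≤ (1:ℝ) := by
                        have h7 := Real.rpow_le_rpow_of_nonpos one_pos h1 (neg_nonpos.mpr hζ0.le)
                        rwa [Real.one_rpow] at h7
                      simpa using ENNReal.ofReal_le_ofReal h6
                  _ = volume (ball (0:EuclideanSpace ℝ (Fin d)) r \ ball 0 1) :=
                      setLIntegral_one _
                  _ ≤ volume (ball (0:EuclideanSpace ℝ (Fin d)) r) :=
                      measure_mono diff_subset
                  _ ≤ ENNReal.ofReal (t^d) * V := by
                      haveI : Nonempty (Fin d) := ⟨⟨0, by exact_mod_cast hdR⟩⟩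
                      rw [Measure.addHaar_ball _ _ hr0.le, finrank_euclideanSpace_fin]
                      refine mul_le_mul_left (ENNReal.ofReal_le_ofReal ?_) _
                      apply pow_le_pow_left₀ hr0.le
                      rw [hr]; linarith
      _ = ENNReal.ofReal (K * Real.exp (-t^2/8)) * (B + ENNReal.ofReal (t^d) * V) := mul_comm _ _
  refine le_trans (add_le_add hA_le hAc_le) ?_
  -- now a purely arithmetic bound
  have hCg : Cg = ENNReal.ofReal Cg.toReal := (ENNReal.ofReal_toReal hCgfin.ne).symm
  have hB : B ≤ ENNReal.ofReal B.toReal := le_of_eq (ENNReal.ofReal_toReal hBfin.ne).symm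
  have hV : V = ENNReal.ofReal V.toReal := (ENNReal.ofReal_toReal hVfin.ne).symm
  have hCg0 : 0 ≤ Cg.toReal := ENNReal.toReal_nonneg
  have hB0 : 0 ≤ B.toReal := ENNReal.toReal_nonneg
  have hV0 : 0 ≤ V.toReal := ENNReal.toReal_nonneg
  -- key real inequality
  have key : ∀ s : ℝ, 0 ≤ s → s + ζ ≤ 2*d → t ^ s * Real.exp (-t^2/8) ≤ M * t ^ (-ζ) := by
    intro s hs hsd
    have h := aux_exp_bound d (s := s + ζ) (by linarith) hsd hw
    rw [Real.rpow_add hw0] at h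
    have htζ : 0 < t ^ ζ := Real.rpow_pos_of_pos hw0 _
    rw [Real.rpow_neg hw0.le, ← div_eq_mul_inv, le_div_iff₀ htζ]
    calc t ^ s * Real.exp (-t^2/8) * t ^ ζ = t ^ s * t ^ ζ * Real.exp (-t^2/8) := by ring
      _ ≤ 8^d * (d.factorial : ℝ) := h
      _ = M := hM.symm
  have hb1 : Real.exp (-t^2/8) ≤ M * t ^ (-ζ) := by
    have h := key 0 le_rfl (by linarith)
    rwa [Real.rpow_zero, one_mul] at h
  have hb2 : t^d * Real.exp (-t^2/8) ≤ M * t ^ (-ζ) := by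
    have h := key (d:ℝ) (by positivity) (by linarith)
    rwa [Real.rpow_natCast] at h
  have hterm1 : ENNReal.ofReal (r ^ (-ζ)) * Cg
      ≤ ENNReal.ofReal ((2:ℝ)^ζ * Cg.toReal * t ^ (-ζ)) := by
    have hCgm : ENNReal.ofReal (r ^ (-ζ)) * Cg = ENNReal.ofReal (r ^ (-ζ) * Cg.toReal) := by
      rw [ENNReal.ofReal_mul (Real.rpow_nonneg hr0.le _), ENNReal.ofReal_toReal hCgfin.ne]
    rw [hCgm]
    apply ENNReal.ofReal_le_ofReal
    have hreq : r ^ (-ζ) = (2:ℝ)^ζ * t ^ (-ζ) := by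
      rw [hr, Real.div_rpow hw0.le (by norm_num : (0:ℝ) ≤ 2),
        Real.rpow_neg (by norm_num : (0:ℝ) ≤ 2)]
      field_simp
    rw [hreq]
    exact le_of_eq (by ring)
  have hterm2 : ENNReal.ofReal (K * Real.exp (-t^2/8)) * (B + ENNReal.ofReal (t^d) * V)
      ≤ ENNReal.ofReal (K * M * (B.toReal + V.toReal) * t ^ (-ζ)) := by
    have hstep : B + ENNReal.ofReal (t^d) * V
        ≤ ENNReal.ofReal (B.toReal + t^d * V.toReal) := by
      rw [ENNReal.ofReal_add hB0 (by positivity)]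
      apply add_le_add hB
      rw [ENNReal.ofReal_mul (by positivity : (0:ℝ) ≤ t^d)]
      exact mul_le_mul_right (le_of_eq (ENNReal.ofReal_toReal hVfin.ne).symm) _
    calc ENNReal.ofReal (K * Real.exp (-t^2/8)) * (B + ENNReal.ofReal (t^d) * V)
        ≤ ENNReal.ofReal (K * Real.exp (-t^2/8)) * ENNReal.ofReal (B.toReal + t^d * V.toReal) :=
          mul_le_mul_right hstep _
        _ = ENNReal.ofReal (K * Real.exp (-t^2/8) * (B.toReal + t^d * V.toReal)) := by
          rw [← ENNReal.ofReal_mul (by positivity)]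
        _ ≤ ENNReal.ofReal (K * M * (B.toReal + V.toReal) * t ^ (-ζ)) := by
          apply ENNReal.ofReal_le_ofReal
          have htneg : 0 ≤ t ^ (-ζ) := Real.rpow_nonneg hw0.le _
          have e1 : Real.exp (-t^2/8) * B.toReal ≤ M * t ^ (-ζ) * B.toReal :=
            mul_le_mul_of_nonneg_right hb1 hB0
          have e2 : Real.exp (-t^2/8) * (t^d * V.toReal) ≤ M * t ^ (-ζ) * V.toReal := by
            have h8 : t^d * Real.exp (-t^2/8) * V.toReal ≤ M * t ^ (-ζ) * V.toReal :=
              mul_le_mul_of_nonneg_right hb2 hV0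
            calc Real.exp (-t^2/8) * (t^d * V.toReal)
                = t^d * Real.exp (-t^2/8) * V.toReal := by ring
              _ ≤ M * t ^ (-ζ) * V.toReal := h8
          have e3 := add_le_add e1 e2
          calc K * Real.exp (-t^2/8) * (B.toReal + t^d * V.toReal)
              = K * (Real.exp (-t^2/8) * B.toReal + Real.exp (-t^2/8) * (t^d * V.toReal)) := by
                ring
            _ ≤ K * (M * t ^ (-ζ) * B.toReal + M * t ^ (-ζ) * V.toReal) :=
                mul_le_mul_of_nonneg_left e3 hKpos.le
            _ = K * M * (B.toReal + V.toReal) * t ^ (-ζ) := by ring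
  calc ENNReal.ofReal (r ^ (-ζ)) * Cg
        + ENNReal.ofReal (K * Real.exp (-t^2/8)) * (B + ENNReal.ofReal (t^d) * V)
      ≤ ENNReal.ofReal ((2:ℝ)^ζ * Cg.toReal * t ^ (-ζ))
        + ENNReal.ofReal (K * M * (B.toReal + V.toReal) * t ^ (-ζ)) := add_le_add hterm1 hterm2
    _ ≤ ENNReal.ofReal (((2:ℝ)^ζ * Cg.toReal + K * M * (B.toReal + V.toReal) + 1) * t ^ (-ζ)) := by
        rw [← ENNReal.ofReal_add (by positivity) (by positivity)]
        apply ENNReal.ofReal_le_ofReal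
        have htneg : 0 ≤ t ^ (-ζ) := Real.rpow_nonneg hw0.le _
        nlinarith
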